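/- Let ℓ be a natural number and let T be a finite simple graph that is connected and satisfies |E(T)| ≤ |V(T)| − 1 + ℓ (i.e., T ∈ T_ℓ). Then the chromatic number χ(T) of T satisfies χ(T) ≤ 2·√ℓ + 2 (as real numbers). -/

import Mathlib

open Finset SimpleGraph

variable {V : Type} [Fintype V] [DecidableEq V]

/-- crossing lemma: in a connected graph, at least `|V| - |S|` edges leave `S`. -/
lemma Tl_cross {T : SimpleGraph V} [DecidableRel T.Adj] (hconn : T.Connected)
    (n : ℕ) : ∀ S : Finset V, S.Nonempty → Fintype.card V - S.card = n →
      n ≤ (T.edgeFinset.filter (fun e => ¬ ∀ x ∈ e, x ∈ S)).card := by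
  induction n with
  | zero => intro S _ _; exact Nat.zero_le _
  | succ n ih =>
    intro S hS hn
    have hle : S.card ≤ Fintype.card V := card_le_card (subset_univ S) |>.trans_eq card_univ
    have hlt : S.card < Fintype.card V := by omega
    have hne : S ≠ univ := by
      intro h; rw [h, card_univ] at hlt; omega
    obtain ⟨w, hw⟩ : ∃ w, w ∉ S := by
      by_contra h; push_neg at h; exact hne (eq_univ_iff_forall.mpr h)
    obtain ⟨u, hu⟩ := hS
    obtain ⟨p⟩ := hconn.preconnected u w
    obtain ⟨d, _, hdS, hdS'⟩ := p.exists_boundary_dart (↑S : Set V) (by simpa using hu)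
      (by simpa using hw)
    have hadj : T.Adj d.fst d.snd := d.adj
    have hdfst : d.fst ∈ S := by simpa using hdS
    have hdsnd : d.snd ∉ S := by simpa using hdS'
    set S' := insert d.snd S with hS'
    have hcard : S'.card = S.card + 1 := card_insert_of_notMem hdsnd
    have hih := ih S' ⟨d.snd, mem_insert_self _ _⟩ (by omega)
    have hsub : insert s(d.fst, d.snd) (T.edgeFinset.filter (fun e => ¬ ∀ x ∈ e, x ∈ S'))
        ⊆ T.edgeFinset.filter (fun e => ¬ ∀ x ∈ e, x ∈ S) := by
      intro e he
      rcases mem_insert.mp he with rfl | he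
      · refine mem_filter.mpr ⟨mem_edgeFinset.mpr hadj, ?_⟩
        push_neg
        exact ⟨d.snd, Sym2.mem_mk_right d.fst d.snd, hdsnd⟩
      · refine mem_filter.mpr ⟨(mem_filter.mp he).1, ?_⟩
        have := (mem_filter.mp he).2
        intro hall
        exact this (fun x hx => mem_insert_of_mem (hall x hx))
    have hnotmem : s(d.fst, d.snd) ∉ T.edgeFinset.filter (fun e => ¬ ∀ x ∈ e, x ∈ S') := by
      intro h
      refine (mem_filter.mp h).2 (fun x hx => ?_)
      rcases Sym2.mem_iff.mp hx with rfl | rfl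
      · exact mem_insert_of_mem hdfst
      · exact mem_insert_self _ _
    calc n + 1 ≤ (T.edgeFinset.filter (fun e => ¬ ∀ x ∈ e, x ∈ S')).card + 1 := by omega
      _ = (insert s(d.fst, d.snd) (T.edgeFinset.filter (fun e => ¬ ∀ x ∈ e, x ∈ S'))).card := by
          rw [card_insert_of_notMem hnotmem]
      _ ≤ _ := card_le_card hsub

/-- handshake within a subset. -/
lemma Tl_handshake {T : SimpleGraph V} [DecidableRel T.Adj] (S : Finset V) :
    ∑ v ∈ S, (S.filter (T.Adj v)).card
      = 2 * (T.edgeFinset.filter (fun e => ∀ x ∈ e, x ∈ S)).card := by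
  let G : SimpleGraph V :=
    { Adj := fun v w => v ∈ S ∧ w ∈ S ∧ T.Adj v w
      symm := ⟨fun v w h => ⟨h.2.1, h.1, h.2.2.symm⟩⟩
      loopless := ⟨fun v h => T.loopless.irrefl v h.2.2⟩ }
  have hGadj : ∀ v w, G.Adj v w ↔ (v ∈ S ∧ w ∈ S ∧ T.Adj v w) := fun _ _ => Iff.rfl
  haveI : DecidableRel G.Adj := fun v w =>
    decidable_of_iff (v ∈ S ∧ w ∈ S ∧ T.Adj v w) (hGadj v w).symm
  have h1 := G.sum_degrees_eq_twice_card_edges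
  have hdeg : ∀ v, G.degree v = if v ∈ S then (S.filter (T.Adj v)).card else 0 := by
    intro v
    rw [degree, neighborFinset_eq_filter]
    by_cases hv : v ∈ S
    · rw [if_pos hv]
      congr 1
      ext w
      simp [hGadj, hv, and_comm]
    · rw [if_neg hv]
      rw [card_eq_zero]
      ext w
      simp [hGadj, hv]
  have hsum : ∑ v, G.degree v = ∑ v ∈ S, (S.filter (T.Adj v)).card := by
    rw [← sum_subset (subset_univ S) (fun x _ hx => by rw [hdeg, if_neg hx])]
    exact sum_congr rfl (fun v hv => by rw [hdeg, if_pos hv])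
  have hedge : G.edgeFinset = T.edgeFinset.filter (fun e => ∀ x ∈ e, x ∈ S) := by
    ext e
    induction e with
    | _ a b =>
      simp only [mem_edgeFinset, mem_edgeSet, mem_filter, hGadj]
      constructor
      · rintro ⟨ha, hb, hab⟩
        refine ⟨hab, fun x hx => ?_⟩
        rcases Sym2.mem_iff.mp hx with rfl | rfl
        · exact ha
        · exact hb
      · rintro ⟨hab, hall⟩
        exact ⟨hall a (by simp), hall b (by simp), hab⟩
  rw [← hsum, h1, hedge]

/-- degeneracy coloring. -/
lemma Tl_colorable {T : SimpleGraph V} [DecidableRel T.Adj] (k : ℕ)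
    (h : ∀ S : Finset V, S.Nonempty → ∃ v ∈ S, (S.filter (T.Adj v)).card ≤ k) :
    T.Colorable (k + 1) := by
  have key : ∀ S : Finset V, ∃ C : V → Fin (k + 1),
      ∀ v ∈ S, ∀ w ∈ S, T.Adj v w → C v ≠ C w := by
    intro S
    induction S using Finset.strongInduction with
    | _ S ih =>
      rcases S.eq_empty_or_nonempty with rfl | hS
      · exact ⟨fun _ => 0, by simp⟩
      obtain ⟨v, hv, hdeg⟩ := h S hS
      obtain ⟨C, hC⟩ := ih (S.erase v) (erase_ssubset hv)
      set N : Finset V := (S.erase v).filter (T.Adj v) with hN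
      have hNle : N.card ≤ k := by
        refine le_trans (card_le_card ?_) hdeg
        exact filter_subset_filter _ (erase_subset v S)
      have himg : (N.image C).card < k + 1 :=
        lt_of_le_of_lt (le_trans card_image_le hNle) (Nat.lt_succ_self k)
      obtain ⟨c, hc⟩ : ∃ c, c ∉ N.image C := by
        have hcompl : ((N.image C)ᶜ : Finset (Fin (k+1))).Nonempty := by
          rw [← card_pos, card_compl, Fintype.card_fin]
          omega
        obtain ⟨c, hcmem⟩ := hcompl
        exact ⟨c, mem_compl.mp hcmem⟩
      refine ⟨Function.update C v c, ?_⟩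
      intro x hx y hy hxy
      have hxyne : x ≠ y := hxy.ne
      by_cases hxv : x = v
      · have hyv : y ≠ v := fun h => hxyne (hxv.trans h.symm)
        have hadjvy : T.Adj v y := by rw [← hxv]; exact hxy
        rw [hxv, Function.update_self, Function.update_of_ne hyv]
        intro heq
        exact hc (mem_image.mpr ⟨y, mem_filter.mpr ⟨mem_erase.mpr ⟨hyv, hy⟩, hadjvy⟩, heq.symm⟩)
      · by_cases hyv : y = v
        · have hadjvx : T.Adj v x := by rw [← hyv]; exact hxy.symm
          rw [hyv, Function.update_self, Function.update_of_ne hxv]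
          intro heq
          exact hc (mem_image.mpr ⟨x, mem_filter.mpr ⟨mem_erase.mpr ⟨hxv, hx⟩, hadjvx⟩, heq⟩)
        · rw [Function.update_of_ne hxv, Function.update_of_ne hyv]
          exact hC x (mem_erase.mpr ⟨hxv, hx⟩) y (mem_erase.mpr ⟨hyv, hy⟩) hxy
  obtain ⟨C, hC⟩ := key univ
  exact ⟨Coloring.mk C (fun {a b} hab => hC a (mem_univ a) b (mem_univ b) hab)⟩

/-- If `T` is a finite simple connected graph with `|E(T)| ≤ |V(T)| - 1 + ℓ`
(i.e. `T ∈ 𝕋_ℓ`), then its chromatic number is at most `2√ℓ + 2` (as real numbers). -/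
theorem chromaticNumber_le_of_mem_Tl {V : Type} [Fintype V] (T : SimpleGraph V) (ℓ : ℕ)
    (hconn : T.Connected) (hedges : T.edgeSet.ncard ≤ Fintype.card V - 1 + ℓ)
    (χ : ℕ) (hχ : T.chromaticNumber = (χ : ℕ∞)) :
    (χ : ℝ) ≤ 2 * Real.sqrt (ℓ : ℝ) + 2 := by
  classical
  set n := Fintype.card V with hn
  set s := Nat.sqrt (2 * ℓ) with hs
  set k := s + 1 with hk
  have hm : T.edgeFinset.card ≤ n - 1 + ℓ := by
    have : T.edgeSet.ncard = T.edgeFinset.card := by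
      rw [Set.ncard_eq_toFinset_card']
      congr 1
    omega
  have hsq : 2 * ℓ ≤ s * s + 2 * s := by
    have := Nat.lt_succ_sqrt (2 * ℓ)
    rw [← hs] at this
    nlinarith
  have hdeg : ∀ S : Finset V, S.Nonempty → ∃ v ∈ S, (S.filter (T.Adj v)).card ≤ k := by
    intro S hS
    have hcross := Tl_cross hconn (n - S.card) S hS rfl
    have hsplit := card_filter_add_card_filter_not
      (s := T.edgeFinset) (p := fun e => ∀ x ∈ e, x ∈ S)
    have hsle : S.card ≤ n := (card_le_card (subset_univ S)).trans_eq card_univ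
    have h1 : 1 ≤ S.card := hS.card_pos
    obtain ⟨c', hc'⟩ : ∃ c', S.card = c' + 1 := ⟨S.card - 1, by omega⟩
    have hinside : (T.edgeFinset.filter (fun e => ∀ x ∈ e, x ∈ S)).card ≤ c' + ℓ := by
      omega
    by_contra hcon
    push_neg at hcon
    have hlow : ∀ v ∈ S, k + 1 ≤ (S.filter (T.Adj v)).card := fun v hv => hcon v hv
    -- each degree is at most S.card - 1
    obtain ⟨v₀, hv₀⟩ := hS
    have hdle : (S.filter (T.Adj v₀)).card ≤ c' := by
      have hsub : S.filter (T.Adj v₀) ⊆ S.erase v₀ := by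
        intro x hx
        exact mem_erase.mpr ⟨(mem_filter.mp hx).2.ne', (mem_filter.mp hx).1⟩
      have := card_le_card hsub
      rw [card_erase_of_mem hv₀] at this
      omega
    have hc'ge : s + 2 ≤ c' := by
      have := hlow v₀ hv₀
      omega
    have havg : S.card * (k + 1) ≤ ∑ v ∈ S, (S.filter (T.Adj v)).card := by
      calc S.card * (k + 1) = ∑ _v ∈ S, (k + 1) := by rw [sum_const, smul_eq_mul]
        _ ≤ _ := sum_le_sum hlow
    rw [Tl_handshake S] at havg
    have hfin : (c' + 1) * (s + 2) ≤ 2 * (c' + ℓ) := by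
      calc (c' + 1) * (s + 2) = S.card * (k + 1) := by rw [hc', hk]
        _ ≤ 2 * (T.edgeFinset.filter (fun e => ∀ x ∈ e, x ∈ S)).card := havg
        _ ≤ 2 * (c' + ℓ) := by omega
    nlinarith
  have hcol : T.Colorable (k + 1) := Tl_colorable k hdeg
  have hle : T.chromaticNumber ≤ (k + 1 : ℕ) := hcol.chromaticNumber_le
  rw [hχ] at hle
  have hχle : χ ≤ k + 1 := by exact_mod_cast hle
  have hcast : (χ : ℝ) ≤ (s : ℝ) + 2 := by
    have : (χ : ℝ) ≤ ((k + 1 : ℕ) : ℝ) := by exact_mod_cast hχle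
    rw [hk] at this
    push_cast at this ⊢
    linarith
  refine hcast.trans ?_
  have hsle2 : (s : ℝ) ≤ 2 * Real.sqrt ℓ := by
    have h2 : (s : ℝ) * s ≤ 2 * ℓ := by
      have h4 := Nat.sqrt_le' (2 * ℓ)
      rw [← hs] at h4
      have h5 : ((s ^ 2 : ℕ) : ℝ) ≤ ((2 * ℓ : ℕ) : ℝ) := Nat.cast_le.mpr h4
      push_cast at h5
      nlinarith
    have h3 : Real.sqrt ℓ * Real.sqrt ℓ = ℓ := Real.mul_self_sqrt (by positivity)
    nlinarith [Real.sqrt_nonneg (ℓ : ℝ), Nat.cast_nonneg (α := ℝ) s]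
  linarith
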